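/- The Weyl norm is invariant under the unitary action: if φ = [[α, β], [γ, δ]] is a 2×2 unitary matrix and f is a degree-d complex polynomial, define f^φ(y) = (γy + δ)^d f((αy + β)/(γy + δ)) (expanded as a polynomial of degree at most d); then ‖f^φ‖_d = ‖f‖_d. -/

import Mathlib

open Polynomial Finset

/-- The Weyl (Bombieri) norm on polynomials of degree at most `m`. -/
noncomputable def weylNorm (m : ℕ) (p : Polynomial ℂ) : ℝ :=
  Real.sqrt (∑ i ∈ Finset.range (m + 1), ‖p.coeff i‖ ^ 2 / (Nat.choose m i))

/-- The action of a 2×2 matrix `[[α,β],[γ,δ]]` on a polynomial of degree at most `d`: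
`f^φ(y) = (γy+δ)^d f((αy+β)/(γy+δ))`, expanded as a polynomial, i.e.
`f^φ = ∑ᵢ fᵢ (αY+β)ⁱ (γY+δ)^{d-i}`. -/
noncomputable def unitaryAction (d : ℕ) (α β γ δ : ℂ) (f : Polynomial ℂ) :
    Polynomial ℂ :=
  ∑ i ∈ Finset.range (d + 1),
    C (f.coeff i) * (C α * X + C β) ^ i * (C γ * X + C δ) ^ (d - i)

section Aux
open Nat (factorial)
local notation:10000 n "!" => Nat.factorial n

private lemma coeff_linear_pow (a b : ℂ) (m r : ℕ) :
    ((C a * X + C b)^m).coeff r = if r ≤ m then (m.choose r : ℂ) * a^r * b^(m-r) else 0 := by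
  rw [add_pow, finset_sum_coeff]
  have h : ∀ i ∈ range (m+1), ((C a * X)^i * C b ^ (m-i) * (m.choose i : ℂ[X])).coeff r
      = if r = i then (m.choose r : ℂ) * a^r * b^(m-r) else 0 := by
    intro i hi
    have e : (C a * X)^i * C b ^ (m-i) * (m.choose i : ℂ[X])
        = C ((m.choose i : ℂ) * a^i * b^(m-i)) * X^i := by
      rw [← C_eq_natCast, mul_pow, ← C_pow, ← C_pow, C_mul, C_mul]; ring
    rw [e, coeff_C_mul, coeff_X_pow]
    split_ifs with h1
    · subst h1; ring
    · ring
  rw [Finset.sum_congr rfl h, Finset.sum_ite_eq (range (m+1)) r]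
  simp only [mem_range, Nat.lt_succ_iff]

private lemma choose_id (d j k r : ℕ) (hj : j ≤ d) (hk : k ≤ d) (hrj : r ≤ j) (hrk : r ≤ k)
    (h : j + k ≤ d + r) :
    d.choose j * (j.choose r * (d-j).choose (k-r)) =
      d.choose k * (k.choose r * (d-k).choose (j-r)) := by
  have e1 : j.choose r * r ! * (j - r)! = j ! := Nat.choose_mul_factorial_mul_factorial hrj
  have e2 : (d-j).choose (k-r) * (k-r)! * (d+r-j-k)! = (d-j)! := by
    have := Nat.choose_mul_factorial_mul_factorial (n := d - j) (k := k - r) (by omega)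
    have e : (d-j)-(k-r) = d+r-j-k := by omega
    rwa [e] at this
  have e3 : d.choose j * j ! * (d-j)! = d ! := Nat.choose_mul_factorial_mul_factorial hj
  have f1 : k.choose r * r ! * (k - r)! = k ! := Nat.choose_mul_factorial_mul_factorial hrk
  have f2 : (d-k).choose (j-r) * (j-r)! * (d+r-j-k)! = (d-k)! := by
    have := Nat.choose_mul_factorial_mul_factorial (n := d - k) (k := j - r) (by omega)
    have e : (d-k)-(j-r) = d+r-j-k := by omega
    rwa [e] at this
  have f3 : d.choose k * k ! * (d-k)! = d ! := Nat.choose_mul_factorial_mul_factorial hk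
  have key : d.choose j * (j.choose r * (d-j).choose (k-r)) * (r ! * ((j-r)! * ((k-r)! * (d+r-j-k)!)))
      = d.choose k * (k.choose r * (d-k).choose (j-r)) * (r ! * ((j-r)! * ((k-r)! * (d+r-j-k)!))) := by
    rw [show d.choose j * (j.choose r * (d-j).choose (k-r)) * (r ! * ((j-r)! * ((k-r)! * (d+r-j-k)!)))
      = d.choose j * (j.choose r * r ! * (j-r)!) * ((d-j).choose (k-r) * (k-r)! * (d+r-j-k)!) from by ring,
      e1, e2, e3]
    rw [show d.choose k * (k.choose r * (d-k).choose (j-r)) * (r ! * ((j-r)! * ((k-r)! * (d+r-j-k)!)))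
      = d.choose k * (k.choose r * r ! * (k-r)!) * ((d-k).choose (j-r) * (j-r)! * (d+r-j-k)!) from by ring,
      f1, f2, f3]
  exact Nat.eq_of_mul_eq_mul_right (by positivity) key

private lemma sum_aux (d k : ℕ) (hk : k ≤ d) (g : ℕ → ℂ) :
    ∑ r ∈ range (k+1), g r = ∑ r ∈ range (d+1), if r ≤ k then g r else 0 := by
  rw [← Finset.sum_filter]
  congr 1
  ext r
  simp only [mem_filter, mem_range]
  omega

private lemma sym (d j k : ℕ) (hj : j ≤ d) (hk : k ≤ d) (a b c e : ℂ) :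
    (d.choose j : ℂ) * ((C a * X + C b)^j * (C c * X + C e)^(d-j)).coeff k
    = (d.choose k : ℂ) * ((C a * X + C c)^k * (C b * X + C e)^(d-k)).coeff j := by
  rw [coeff_mul, Finset.Nat.sum_antidiagonal_eq_sum_range_succ_mk,
    coeff_mul, Finset.Nat.sum_antidiagonal_eq_sum_range_succ_mk,
    sum_aux d k hk, sum_aux d j hj, Finset.mul_sum, Finset.mul_sum]
  refine Finset.sum_congr rfl fun r _ => ?_
  simp only [coeff_linear_pow]
  simp only [mul_ite, ite_mul, mul_zero, zero_mul]
  split_ifs with h1 h2 h3 h4 h5 h6 h7 h8 <;> try rfl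
  all_goals try omega
  --mc
  have he : d - j - (k - r) = d - k - (j - r) := by omega
  have hc : (d.choose j : ℂ) * ((j.choose r : ℂ) * ((d-j).choose (k-r) : ℂ))
      = (d.choose k : ℂ) * ((k.choose r : ℂ) * ((d-k).choose (j-r) : ℂ)) := by
    push_cast [← Nat.cast_mul]
    exact_mod_cast congrArg (Nat.cast (R := ℂ)) (choose_id d j k r hj hk (by omega) (by omega) (by omega))
  rw [he]
  calc (d.choose j : ℂ) * ((j.choose r : ℂ) * a^r * b^(j-r) * ((((d-j).choose (k-r)) : ℂ) * c^(k-r) * e^(d-k-(j-r))))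
      = ((d.choose j : ℂ) * ((j.choose r : ℂ) * ((d-j).choose (k-r) : ℂ))) * (a^r * b^(j-r) * c^(k-r) * e^(d-k-(j-r))) := by ring
    _ = ((d.choose k : ℂ) * ((k.choose r : ℂ) * ((d-k).choose (j-r) : ℂ))) * (a^r * b^(j-r) * c^(k-r) * e^(d-k-(j-r))) := by rw [hc]
    _ = (d.choose k : ℂ) * ((k.choose r : ℂ) * a^r * c^(k-r) * (((d-k).choose (j-r) : ℂ) * b^(j-r) * e^(d-k-(j-r)))) := by ring

private lemma step (n : ℕ) (a b : ℂ) (q : ℂ[X]) (hq : q.natDegree ≤ n) (u v : ℂ[X]) :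
    ∑ k ∈ range (n+2), C (((C a * X + C b) * q).coeff k) * u^k * v^(n+1-k)
    = (C a * u + C b * v) * ∑ k ∈ range (n+1), C (q.coeff k) * u^k * v^(n-k) := by
  have hco : ∀ k, ((C a * X + C b) * q).coeff k = a * (X * q).coeff k + b * q.coeff k := by
    intro k
    rw [add_mul, coeff_add, mul_assoc, coeff_C_mul, coeff_C_mul]
  simp only [hco]
  simp only [C_add, add_mul, Finset.sum_add_distrib]
  congr 1
  · rw [Finset.sum_range_succ']
    have h0 : (X * q).coeff 0 = 0 := by
      rw [mul_coeff_zero, coeff_X_zero, zero_mul]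
    rw [h0]
    simp only [coeff_X_mul, Nat.succ_sub_succ_eq_sub, mul_zero, C_0, zero_mul, add_zero,
      C_mul, pow_succ]
    rw [Finset.mul_sum]
    refine Finset.sum_congr rfl fun k hk => ?_
    ring
  · rw [Finset.sum_range_succ]
    have h0 : q.coeff (n+1) = 0 := coeff_eq_zero_of_natDegree_lt (by omega)
    rw [h0]
    simp only [C_0, zero_mul, mul_zero, add_zero, C_mul]
    rw [Finset.mul_sum]
    refine Finset.sum_congr rfl fun k hk => ?_
    have h1 : n + 1 - k = (n - k) + 1 := by rw [mem_range] at hk; omega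
    rw [h1, pow_succ]
    ring

private lemma natDeg_lin (a b : ℂ) : (C a * X + C b).natDegree ≤ 1 := by
  apply natDegree_add_le_of_degree_le
  · exact (natDegree_C_mul_le a X).trans (by simp)
  · simp

private lemma hom_eval1 (j : ℕ) (c e : ℂ) (u v : ℂ[X]) :
    ∑ k ∈ range (j+1), C (((C c * X + C e)^j).coeff k) * u^k * v^(j-k)
    = (C c * u + C e * v)^j := by
  induction j with
  | zero => simp
  | succ n ih =>
    have hq : ((C c * X + C e)^n).natDegree ≤ n := by
      apply (natDegree_pow_le).trans
      nlinarith [natDeg_lin c e]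
    have := step n c e ((C c * X + C e)^n) hq u v
    rw [show n+1+1 = n+2 from rfl, ← pow_succ'] at this
    rw [this, ih, pow_succ']

private lemma hom_eval (i j : ℕ) (a b c e : ℂ) (u v : ℂ[X]) :
    ∑ k ∈ range (i+j+1), C (((C a * X + C b)^i * (C c * X + C e)^j).coeff k) * u^k * v^(i+j-k)
    = (C a * u + C b * v)^i * (C c * u + C e * v)^j := by
  induction i with
  | zero => simpa using hom_eval1 j c e u v
  | succ n ih =>
    have hq : ((C a * X + C b)^n * (C c * X + C e)^j).natDegree ≤ n + j := by
      apply natDegree_mul_le.trans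
      have h1 : ((C a * X + C b)^n).natDegree ≤ n := by
        apply natDegree_pow_le.trans; nlinarith [natDeg_lin a b]
      have h2 : ((C c * X + C e)^j).natDegree ≤ j := by
        apply natDegree_pow_le.trans; nlinarith [natDeg_lin c e]
      omega
    have hstep := step (n+j) a b ((C a * X + C b)^n * (C c * X + C e)^j) hq u v
    have hre : (C a * X + C b) * ((C a * X + C b)^n * (C c * X + C e)^j)
        = (C a * X + C b)^(n+1) * (C c * X + C e)^j := by
      rw [pow_succ']; ring
    rw [hre] at hstep
    have hidx : n + 1 + j + 1 = n + j + 2 := by omega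
    have hidx2 : ∀ k, n + 1 + j - k = n + j + 1 - k := fun k => by omega
    simp only [hidx, hidx2]
    rw [hstep, ih, pow_succ']
    ring

end Aux

/-- The Weyl norm is invariant under the action of unitary matrices. -/
theorem weylNorm_unitary_invariant (d : ℕ) (f : Polynomial ℂ)
    (hf : f.natDegree ≤ d) (φ : Matrix (Fin 2) (Fin 2) ℂ)
    (hφ : φ ∈ Matrix.unitaryGroup (Fin 2) ℂ) :
    weylNorm d (unitaryAction d (φ 0 0) (φ 0 1) (φ 1 0) (φ 1 1) f) =
      weylNorm d f := by
  classical
  set α := φ 0 0; set β := φ 0 1; set γ := φ 1 0; set δ := φ 1 1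
  have hφ' : φ * star φ = 1 := Matrix.mem_unitaryGroup_iff.mp hφ
  have hent : ∀ i j, (φ * star φ) i j = (1 : Matrix (Fin 2) (Fin 2) ℂ) i j := fun i j => by
    rw [hφ']
  have h1 : α * (starRingEnd ℂ) α + β * (starRingEnd ℂ) β = 1 := by
    have := hent 0 0
    simpa [Matrix.mul_apply, Fin.sum_univ_two, Matrix.one_apply, Matrix.star_apply,
      Complex.star_def] using this
  have h2 : α * (starRingEnd ℂ) γ + β * (starRingEnd ℂ) δ = 0 := by
    have := hent 0 1
    simpa [Matrix.mul_apply, Fin.sum_univ_two, Matrix.one_apply, Matrix.star_apply,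
      Complex.star_def] using this
  have h3 : γ * (starRingEnd ℂ) α + δ * (starRingEnd ℂ) β = 0 := by
    have := hent 1 0
    simpa [Matrix.mul_apply, Fin.sum_univ_two, Matrix.one_apply, Matrix.star_apply,
      Complex.star_def] using this
  have h4 : γ * (starRingEnd ℂ) γ + δ * (starRingEnd ℂ) δ = 1 := by
    have := hent 1 1
    simpa [Matrix.mul_apply, Fin.sum_univ_two, Matrix.one_apply, Matrix.star_apply,
      Complex.star_def] using this
  -- notations
  set cj := starRingEnd ℂ with hcj
  set M : ℕ → ℕ → ℂ := fun k i => ((C α * X + C β)^i * (C γ * X + C δ)^(d-i)).coeff k with hM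
  set N : ℕ → ℕ → ℂ := fun j k =>
    ((C (cj α) * X + C (cj γ))^k * (C (cj β) * X + C (cj δ))^(d-k)).coeff j with hN
  -- conjugate of M
  have hconj : ∀ k j, cj (M k j) =
      ((C (cj α) * X + C (cj β))^j * (C (cj γ) * X + C (cj δ))^(d-j)).coeff k := by
    intro k j
    rw [hM]
    rw [← Polynomial.coeff_map]
    congr 1
    simp [Polynomial.map_mul, Polynomial.map_pow, Polynomial.map_add, Polynomial.map_C,
      Polynomial.map_X]
  -- composition: ∑_k M k i * N j k = δ_{ij}
  have hMN : ∀ i ≤ d, ∀ j, (∑ k ∈ range (d+1), M k i * N j k) = if j = i then 1 else 0 := by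
    intro i hi j
    have hhom := hom_eval i (d - i) α β γ δ (C (cj α) * X + C (cj γ)) (C (cj β) * X + C (cj δ))
    rw [Nat.add_sub_cancel' hi] at hhom
    have hu : C α * (C (cj α) * X + C (cj γ)) + C β * (C (cj β) * X + C (cj δ)) = X := by
      have : C α * (C (cj α) * X + C (cj γ)) + C β * (C (cj β) * X + C (cj δ))
          = C (α * cj α + β * cj β) * X + C (α * cj γ + β * cj δ) := by
        rw [C_add, C_add, C_mul, C_mul, C_mul, C_mul]; ring
      rw [this, h1, h2, C_0, C_1, one_mul, add_zero]
    have hv : C γ * (C (cj α) * X + C (cj γ)) + C δ * (C (cj β) * X + C (cj δ)) = 1 := by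
      have : C γ * (C (cj α) * X + C (cj γ)) + C δ * (C (cj β) * X + C (cj δ))
          = C (γ * cj α + δ * cj β) * X + C (γ * cj γ + δ * cj δ) := by
        rw [C_add, C_add, C_mul, C_mul, C_mul, C_mul]; ring
      rw [this, h3, h4, C_0, C_1, zero_mul, zero_add]
    rw [hu, hv, one_pow, mul_one] at hhom
    have := congrArg (fun p => p.coeff j) hhom
    rw [finset_sum_coeff] at this
    rw [← coeff_X_pow i j, ← this]
    refine Finset.sum_congr rfl fun k _ => ?_
    rw [mul_assoc, coeff_C_mul]
  -- the delta identity
  have hdelta : ∀ i ≤ d, ∀ j ≤ d,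
      (∑ k ∈ range (d+1), M k i * cj (M k j) / (d.choose k : ℂ))
        = if j = i then 1 / (d.choose i : ℂ) else 0 := by
    intro i hi j hj
    have hterm : ∀ k ∈ range (d+1),
        M k i * cj (M k j) / (d.choose k : ℂ) = M k i * N j k / (d.choose j : ℂ) := by
      intro k hk
      rw [mem_range, Nat.lt_succ_iff] at hk
      have hsym := sym d j k hj hk (cj α) (cj β) (cj γ) (cj δ)
      rw [hconj]
      have hk0 : (d.choose k : ℂ) ≠ 0 := Nat.cast_ne_zero.mpr (Nat.choose_pos hk).ne'
      have hj0 : (d.choose j : ℂ) ≠ 0 := Nat.cast_ne_zero.mpr (Nat.choose_pos hj).ne'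
      rw [div_eq_div_iff hk0 hj0]
      rw [hN]
      linear_combination (M k i) * hsym
    rw [Finset.sum_congr rfl hterm, ← Finset.sum_div, hMN i hi j]
    split_ifs with h
    · subst h; rw [one_div]
    · rw [zero_div]
  -- coefficients of the transformed polynomial
  set g := unitaryAction d α β γ δ f with hgdef
  have hg : ∀ k, g.coeff k = ∑ i ∈ range (d+1), f.coeff i * M k i := by
    intro k
    rw [hgdef, unitaryAction, finset_sum_coeff]
    refine Finset.sum_congr rfl fun i _ => ?_
    rw [mul_assoc, coeff_C_mul, hM]
  -- pass to complex sums
  have hof : ∀ p : ℂ[X],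
      ((∑ k ∈ range (d+1), ‖p.coeff k‖ ^ 2 / (d.choose k : ℝ) : ℝ) : ℂ)
        = ∑ k ∈ range (d+1), p.coeff k * cj (p.coeff k) / (d.choose k : ℂ) := by
    intro p
    push_cast
    refine Finset.sum_congr rfl fun k _ => ?_
    rw [Complex.mul_conj]
    norm_cast
    rw [← Complex.sq_norm]
  have key : (∑ k ∈ range (d+1), g.coeff k * cj (g.coeff k) / (d.choose k : ℂ))
      = ∑ i ∈ range (d+1), f.coeff i * cj (f.coeff i) / (d.choose i : ℂ) := by
    calc ∑ k ∈ range (d+1), g.coeff k * cj (g.coeff k) / (d.choose k : ℂ)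
        = ∑ k ∈ range (d+1), ∑ i ∈ range (d+1), ∑ j ∈ range (d+1),
            (f.coeff i * cj (f.coeff j)) * (M k i * cj (M k j) / (d.choose k : ℂ)) := by
          refine Finset.sum_congr rfl fun k _ => ?_
          rw [hg k, map_sum, Finset.sum_mul_sum, Finset.sum_div]
          refine Finset.sum_congr rfl fun i _ => ?_
          rw [Finset.sum_div]
          refine Finset.sum_congr rfl fun j _ => ?_
          rw [map_mul]
          ring
      _ = ∑ i ∈ range (d+1), ∑ j ∈ range (d+1), (f.coeff i * cj (f.coeff j)) *
            (∑ k ∈ range (d+1), M k i * cj (M k j) / (d.choose k : ℂ)) := by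
          rw [Finset.sum_comm]
          refine Finset.sum_congr rfl fun i _ => ?_
          rw [Finset.sum_comm]
          refine Finset.sum_congr rfl fun j _ => ?_
          rw [← Finset.mul_sum]
      _ = ∑ i ∈ range (d+1), f.coeff i * cj (f.coeff i) / (d.choose i : ℂ) := by
          refine Finset.sum_congr rfl fun i hi => ?_
          rw [mem_range, Nat.lt_succ_iff] at hi
          have inner : ∀ j ∈ range (d+1), (f.coeff i * cj (f.coeff j)) *
              (∑ k ∈ range (d+1), M k i * cj (M k j) / (d.choose k : ℂ))
              = if j = i then f.coeff i * cj (f.coeff j) * (1 / (d.choose i : ℂ)) else 0 := by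
            intro j hj
            rw [mem_range, Nat.lt_succ_iff] at hj
            rw [hdelta i hi j hj]
            split_ifs with h
            · rfl
            · rw [mul_zero]
          rw [Finset.sum_congr rfl inner, Finset.sum_ite_eq' (range (d+1)) i]
          simp only [mem_range, Nat.lt_succ_iff, hi, if_true]
          rw [mul_one_div]
  rw [weylNorm, weylNorm]
  congr 1
  exact Complex.ofReal_inj.mp (by rw [hof g, hof f, key])
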